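/- For every integer k ≥ 3, the set of x ∈ [0,1] satisfying k·(2x(1−x)^k + k·x²·(1−x)^{k−1}) = 1 is nonempty and has a greatest element p₂*, and this p₂* satisfies 1/k < p₂* < min{1, 5/k}. -/

import Mathlib

open Real

lemma cube_cast_nonneg (m : ℕ) : (0:ℝ) ≤ (m:ℝ)*((m:ℝ)-1)*((m:ℝ)-2) := by
  match m with
  | 0 => norm_num
  | 1 => norm_num
  | 2 => norm_num
  | (n+3) =>
    have hn : (0:ℝ) ≤ (n:ℝ) := Nat.cast_nonneg n
    push_cast
    nlinarith [mul_nonneg (mul_nonneg (by linarith : (0:ℝ) ≤ (n:ℝ)+3) (by linarith : (0:ℝ) ≤ (n:ℝ)+2)) (by linarith : (0:ℝ) ≤ (n:ℝ)+1)]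

lemma sq_cast_nonneg (m : ℕ) : (0:ℝ) ≤ (m:ℝ)*((m:ℝ)-1) := by
  match m with
  | 0 => norm_num
  | (n+1) =>
    have h : (1:ℝ) ≤ ((n+1:ℕ):ℝ) := by push_cast; linarith [Nat.cast_nonneg (α := ℝ) n]
    push_cast at h ⊢; nlinarith

lemma bern3 (n : ℕ) {s : ℝ} (hs : 0 ≤ s) :
    1 + n*s + n*((n:ℝ)-1)/2*s^2 + n*((n:ℝ)-1)*((n:ℝ)-2)/6*s^3 ≤ (1+s)^n := by
  induction n with
  | zero => norm_num
  | succ m ih =>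
    have h1 : (0:ℝ) ≤ 1 + s := by linarith
    have hcube := cube_cast_nonneg m
    have hstep : (1 + m*s + m*((m:ℝ)-1)/2*s^2 + m*((m:ℝ)-1)*((m:ℝ)-2)/6*s^3) * (1+s)
        ≤ (1+s)^(m+1) := by
      rw [pow_succ]
      exact mul_le_mul_of_nonneg_right ih h1
    refine le_trans ?_ hstep
    push_cast
    nlinarith [mul_nonneg hcube (pow_nonneg hs 4)]

lemma mono1 (n : ℕ) {a x : ℝ} (ha : 0 < a) (hax : a ≤ x) (hx : x ≤ 1)
    (hcond : 1 - a ≤ a * n) : x * (1-x)^n ≤ a * (1-a)^n := by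
  rcases eq_or_lt_of_le (show a ≤ 1 by linarith) with h1 | h1
  · have hxa : x = a := le_antisymm (by linarith) hax
    rw [hxa]
  · have hc : (0:ℝ) < 1 - a := by linarith
    set r : ℝ := (1-x)/(1-a) with hr
    have hr0 : 0 ≤ r := div_nonneg (by linarith) hc.le
    have hr1 : r ≤ 1 := (div_le_one hc).2 (by linarith)
    have hxr : 1 - x = (1-a) * r := by rw [hr]; field_simp [hc.ne']
    set s : ℝ := 1 - r with hs
    have hs0 : 0 ≤ s := by simp [hs]; linarith
    have key1 : r^n * (1 + n*s) ≤ 1 := by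
      have hB : 1 + n*s ≤ (1+s)^n := one_add_mul_le_pow (by linarith : (-2:ℝ) ≤ s) n
      calc r^n * (1 + n*s) ≤ r^n * (1+s)^n :=
            mul_le_mul_of_nonneg_left hB (pow_nonneg hr0 n)
        _ = (r*(1+s))^n := (mul_pow _ _ _).symm
        _ ≤ 1 := by
            apply pow_le_one₀ <;> nlinarith [sq_nonneg (1-r)]
    have key2 : 1 - (1-a)*r ≤ a * (1 + n*s) := by
      have hna : 0 ≤ a * (n:ℝ) - (1-a) := by linarith
      have : 0 ≤ s * (a * (n:ℝ) - (1-a)) := mul_nonneg hs0 hna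
      nlinarith
    have hxe : x = 1 - (1-a)*r := by linarith [hxr]
    have hnn : 0 ≤ 1 - (1-a)*r := by nlinarith
    have hpos : (0:ℝ) < 1 + n*s := by
      have : (0:ℝ) ≤ (n:ℝ)*s := mul_nonneg (Nat.cast_nonneg n) hs0
      linarith
    have hfin : (1 - (1-a)*r) * r^n ≤ a := by
      have chain : ((1 - (1-a)*r) * r^n) * (1 + n*s) ≤ a * (1 + n*s) := by
        calc ((1 - (1-a)*r) * r^n) * (1 + n*s)
            = (1 - (1-a)*r) * (r^n * (1 + n*s)) := by ring
          _ ≤ (1 - (1-a)*r) * 1 := mul_le_mul_of_nonneg_left key1 hnn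
          _ = 1 - (1-a)*r := mul_one _
          _ ≤ a * (1 + n*s) := key2
      exact le_of_mul_le_mul_right chain hpos
    calc x * (1-x)^n = (1 - (1-a)*r) * ((1-a)*r)^n := by rw [← hxe, ← hxr]
      _ = ((1 - (1-a)*r) * r^n) * (1-a)^n := by rw [mul_pow]; ring
      _ ≤ a * (1-a)^n := mul_le_mul_of_nonneg_right hfin (pow_nonneg (by linarith) n)

lemma mono2 (n : ℕ) {a x : ℝ} (ha : 0 < a) (hax : a ≤ x) (hx : x ≤ 1)
    (hcond1 : 2*(1 - a) ≤ a * n) (hcond2 : 2*(1-a)^2 ≤ a^2 * ((n:ℝ)*((n:ℝ)-1))) :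
    x^2 * (1-x)^n ≤ a^2 * (1-a)^n := by
  rcases eq_or_lt_of_le (show a ≤ 1 by linarith) with h1 | h1
  · have hxa : x = a := le_antisymm (by linarith) hax
    rw [hxa]
  · have hc : (0:ℝ) < 1 - a := by linarith
    set r : ℝ := (1-x)/(1-a) with hr
    have hr0 : 0 ≤ r := div_nonneg (by linarith) hc.le
    have hr1 : r ≤ 1 := (div_le_one hc).2 (by linarith)
    have hxr : 1 - x = (1-a) * r := by rw [hr]; field_simp [hc.ne']
    set s : ℝ := 1 - r with hs
    have hs0 : 0 ≤ s := by simp [hs]; linarith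
    have hrs : r = 1 - s := by rw [hs]; ring
    clear_value s
    set Q : ℝ := 1 + n*s + (n:ℝ)*((n:ℝ)-1)/2*s^2 with hQ
    clear_value Q
    have key1 : r^n * Q ≤ 1 := by
      have hB : Q ≤ (1+s)^n := by
        have h3 := bern3 n hs0
        have hcube : (0:ℝ) ≤ (n:ℝ)*((n:ℝ)-1)*((n:ℝ)-2)/6*s^3 :=
          mul_nonneg (div_nonneg (cube_cast_nonneg n) (by norm_num)) (pow_nonneg hs0 3)
        rw [hQ]; linarith
      calc r^n * Q ≤ r^n * (1+s)^n :=
            mul_le_mul_of_nonneg_left hB (pow_nonneg hr0 n)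
        _ = (r*(1+s))^n := (mul_pow _ _ _).symm
        _ ≤ 1 := by
            apply pow_le_one₀ <;> nlinarith [sq_nonneg (1-r)]
    have hQpos : (0:ℝ) < Q := by
      have h1' : (0:ℝ) ≤ (n:ℝ)*s := mul_nonneg (Nat.cast_nonneg n) hs0
      have h2' : (0:ℝ) ≤ (n:ℝ)*((n:ℝ)-1)/2*s^2 :=
        mul_nonneg (div_nonneg (sq_cast_nonneg n) (by norm_num)) (sq_nonneg s)
      rw [hQ]; nlinarith [h1', h2']
    have key2 : (1 - (1-a)*r)^2 ≤ a^2 * Q := by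
      have hid : 1 - (1-a)*r = a + (1-a)*s := by rw [hs]; ring
      rw [hid, hQ]
      have t1 : 2*a*((1-a)*s) ≤ a^2*((n:ℝ)*s) := by
        calc 2*a*((1-a)*s) = (2*(1-a))*(a*s) := by ring
          _ ≤ (a*(n:ℝ))*(a*s) := mul_le_mul_of_nonneg_right hcond1 (mul_nonneg ha.le hs0)
          _ = a^2*((n:ℝ)*s) := by ring
      have t2 : ((1-a)*s)^2 ≤ a^2*((n:ℝ)*((n:ℝ)-1)/2*s^2) := by
        have h := mul_le_mul_of_nonneg_right hcond2 (sq_nonneg s)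
        calc ((1-a)*s)^2 = (1-a)^2*s^2 := by ring
          _ ≤ a^2*((n:ℝ)*((n:ℝ)-1))*s^2/2 := by linarith
          _ = a^2*((n:ℝ)*((n:ℝ)-1)/2*s^2) := by ring
      calc (a + (1-a)*s)^2 = a^2 + 2*a*((1-a)*s) + ((1-a)*s)^2 := by ring
        _ ≤ a^2 + a^2*((n:ℝ)*s) + a^2*((n:ℝ)*((n:ℝ)-1)/2*s^2) := by linarith
        _ = a^2 * (1 + (n:ℝ)*s + (n:ℝ)*((n:ℝ)-1)/2*s^2) := by ring
    have hnn : 0 ≤ 1 - (1-a)*r := by nlinarith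
    have hfin : (1 - (1-a)*r)^2 * r^n ≤ a^2 := by
      have chain : ((1 - (1-a)*r)^2 * r^n) * Q ≤ a^2 * Q := by
        calc ((1 - (1-a)*r)^2 * r^n) * Q
            = (1 - (1-a)*r)^2 * (r^n * Q) := by ring
          _ ≤ (1 - (1-a)*r)^2 * 1 := mul_le_mul_of_nonneg_left key1 (sq_nonneg _)
          _ = (1 - (1-a)*r)^2 := mul_one _
          _ ≤ a^2 * Q := key2
      exact le_of_mul_le_mul_right chain hQpos
    have hxe : x = 1 - (1-a)*r := by linarith [hxr]
    calc x^2 * (1-x)^n = (1 - (1-a)*r)^2 * ((1-a)*r)^n := by rw [← hxe, ← hxr]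
      _ = ((1 - (1-a)*r)^2 * r^n) * (1-a)^n := by rw [mul_pow]; ring
      _ ≤ a^2 * (1-a)^n := mul_le_mul_of_nonneg_right hfin (pow_nonneg (by linarith) n)

lemma aux_low (k : ℕ) (hk : 3 ≤ k) :
    1 < (1 - 1/(k:ℝ))^(k-1) * (2*(1 - 1/(k:ℝ)) + 1) := by
  have hk3 : (3:ℝ) ≤ (k:ℝ) := by exact_mod_cast hk
  have hk0 : (0:ℝ) < (k:ℝ) := by linarith
  have hkne : (k:ℝ) ≠ 0 := ne_of_gt hk0
  rcases le_or_gt k 7 with h7 | h7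
  · interval_cases k <;> norm_num
  · have hk8 : (8:ℝ) ≤ (k:ℝ) := by exact_mod_cast h7
    have hkm1 : (0:ℝ) < (k:ℝ) - 1 := by linarith
    have hcast : ((k-1:ℕ):ℝ) = (k:ℝ) - 1 := by
      rw [Nat.cast_sub (by omega)]; norm_num
    have e1 : (1 - 1/(k:ℝ)) * (1 + 1/((k:ℝ)-1)) = 1 := by
      field_simp
      ring
    have e2 : (1 - 1/(k:ℝ))^(k-1) * (1 + 1/((k:ℝ)-1))^(k-1) = 1 := by
      rw [← mul_pow, e1, one_pow]
    have e3 : (1 + 1/((k:ℝ)-1))^(k-1) ≤ Real.exp 1 := by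
      have hb : 1 + 1/((k:ℝ)-1) ≤ Real.exp (1/((k:ℝ)-1)) := by
        have := Real.add_one_le_exp (1/((k:ℝ)-1)); linarith
      calc (1 + 1/((k:ℝ)-1))^(k-1) ≤ (Real.exp (1/((k:ℝ)-1)))^(k-1) :=
            pow_le_pow_left₀ (by positivity) hb _
        _ = Real.exp (((k-1:ℕ):ℝ) * (1/((k:ℝ)-1))) := (Real.exp_nat_mul _ _).symm
        _ = Real.exp 1 := by rw [hcast]; field_simp
    have hcp : (0:ℝ) < (1 - 1/(k:ℝ))^(k-1) := by
      apply pow_pos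
      rw [sub_pos, div_lt_one hk0]; linarith
    have e4 : Real.exp 1 < 2.7182818286 := Real.exp_one_lt_d9
    have e5 : (2.75:ℝ) ≤ 2*(1 - 1/(k:ℝ)) + 1 := by
      have h8 : 1/(k:ℝ) ≤ 1/8 := one_div_le_one_div_of_le (by norm_num) hk8
      linarith
    calc (1:ℝ) = (1 - 1/(k:ℝ))^(k-1) * (1 + 1/((k:ℝ)-1))^(k-1) := e2.symm
      _ ≤ (1 - 1/(k:ℝ))^(k-1) * Real.exp 1 := mul_le_mul_of_nonneg_left e3 hcp.le
      _ < (1 - 1/(k:ℝ))^(k-1) * 2.75 := mul_lt_mul_of_pos_left (by linarith) hcp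
      _ ≤ (1 - 1/(k:ℝ))^(k-1) * (2*(1 - 1/(k:ℝ)) + 1) := mul_le_mul_of_nonneg_left e5 hcp.le

lemma aux_cond2 (k : ℕ) (hk6 : 6 ≤ k) :
    2*(1-(5/(k:ℝ)))^2 ≤ (5/(k:ℝ))^2 * (((k:ℝ)-1)*(((k:ℝ)-1)-1)) := by
  have hk6' : (6:ℝ) ≤ (k:ℝ) := by exact_mod_cast hk6
  have hk0 : (0:ℝ) < (k:ℝ) := by linarith
  have hkne : (k:ℝ) ≠ 0 := ne_of_gt hk0
  have hak5 : (5/(k:ℝ)) * (k:ℝ) = 5 := by field_simp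
  have e1 : (1-(5/(k:ℝ)))*(k:ℝ) = (k:ℝ) - 5 := by rw [sub_mul, one_mul, hak5]
  have e2 : (5/(k:ℝ))^2*(k:ℝ)^2 = 25 := by
    calc (5/(k:ℝ))^2*(k:ℝ)^2 = ((5/(k:ℝ))*(k:ℝ))^2 := by ring
      _ = 25 := by rw [hak5]; norm_num
  refine le_of_mul_le_mul_right ?_ (show (0:ℝ) < (k:ℝ)^2 by positivity)
  calc 2*(1-(5/(k:ℝ)))^2 * (k:ℝ)^2 = 2*((1-(5/(k:ℝ)))*(k:ℝ))^2 := by ring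
    _ = 2*((k:ℝ)-5)^2 := by rw [e1]
    _ ≤ 25*(((k:ℝ)-1)*((k:ℝ)-1-1)) := by nlinarith
    _ = (5/(k:ℝ))^2*(k:ℝ)^2*(((k:ℝ)-1)*((k:ℝ)-1-1)) := by rw [e2]
    _ = (5/(k:ℝ))^2 * (((k:ℝ)-1)*((k:ℝ)-1-1)) * (k:ℝ)^2 := by ring

lemma aux35 (k : ℕ) (hk6 : 6 ≤ k) : 35*(1-(5/(k:ℝ)))^(k-1) < 1 := by
  have hk6' : (6:ℝ) ≤ (k:ℝ) := by exact_mod_cast hk6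
  have hk0 : (0:ℝ) < (k:ℝ) := by linarith
  have hkne : (k:ℝ) ≠ 0 := ne_of_gt hk0
  have ha1 : (5/(k:ℝ)) < 1 := by rw [div_lt_one hk0]; linarith
  have hcast : ((k-1:ℕ):ℝ) = (k:ℝ) - 1 := by
    rw [Nat.cast_sub (by omega)]; norm_num
  have hu0 : (0:ℝ) < (k:ℝ)-5 := by linarith
  have hu0' : (k:ℝ)-5 ≠ 0 := ne_of_gt hu0
  set z : ℝ := 5/((k:ℝ)-5) with hz'
  have hz0 : (0:ℝ) ≤ z := by rw [hz']; positivity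
  have e5 : (1-(5/(k:ℝ)))*(1+z) = 1 := by
    rw [hz']
    field_simp
    ring
  have e6 : (1-(5/(k:ℝ)))^(k-1)*(1+z)^(k-1) = 1 := by rw [← mul_pow, e5, one_pow]
  have hz1 : ((k:ℝ)-5)*z = 5 := by
    rw [hz']; field_simp
  clear_value z
  have hb := bern3 (k-1) hz0
  rw [hcast] at hb
  have hz2 : ((k:ℝ)-5)^2*z^2 = 25 := by
    linear_combination (((k:ℝ)-5)*z + 5) * hz1
  have hz3 : ((k:ℝ)-5)^3*z^3 = 125 := by
    linear_combination (((k:ℝ)-5)^2*z^2 + 5*((k:ℝ)-5)*z + 25) * hz1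
  have key : (35:ℝ) < (1+z)^(k-1) := by
    refine lt_of_lt_of_le ?_ hb
    have q1 : ((k:ℝ)-1)*z*((k:ℝ)-5)^3 = 5*((k:ℝ)-1)*((k:ℝ)-5)^2 := by
      linear_combination (((k:ℝ)-1)*((k:ℝ)-5)^2) * hz1
    have q2 : ((k:ℝ)-1)*(((k:ℝ)-1)-1)/2*z^2*((k:ℝ)-5)^3
        = 25/2*((k:ℝ)-1)*((k:ℝ)-2)*((k:ℝ)-5) := by
      linear_combination (((k:ℝ)-1)*((k:ℝ)-2)/2*((k:ℝ)-5)) * hz2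
    have q3 : ((k:ℝ)-1)*(((k:ℝ)-1)-1)*(((k:ℝ)-1)-2)/6*z^3*((k:ℝ)-5)^3
        = 125/6*((k:ℝ)-1)*((k:ℝ)-2)*((k:ℝ)-3) := by
      linear_combination (((k:ℝ)-1)*((k:ℝ)-2)*((k:ℝ)-3)/6) * hz3
    have h6 : (0:ℝ) ≤ (k:ℝ) - 6 := by linarith
    have hpoly : 35*((k:ℝ)-5)^3 < ((k:ℝ)-5)^3 + 5*((k:ℝ)-1)*((k:ℝ)-5)^2
        + 25/2*((k:ℝ)-1)*((k:ℝ)-2)*((k:ℝ)-5)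
        + 125/6*((k:ℝ)-1)*((k:ℝ)-2)*((k:ℝ)-3) := by
      nlinarith [h6, sq_nonneg ((k:ℝ)-6), mul_nonneg (mul_nonneg h6 h6) h6]
    have hexp : (1 + ((k:ℝ)-1)*z + ((k:ℝ)-1)*(((k:ℝ)-1)-1)/2*z^2
            + ((k:ℝ)-1)*(((k:ℝ)-1)-1)*(((k:ℝ)-1)-2)/6*z^3)*((k:ℝ)-5)^3
        = ((k:ℝ)-5)^3 + 5*((k:ℝ)-1)*((k:ℝ)-5)^2
        + 25/2*((k:ℝ)-1)*((k:ℝ)-2)*((k:ℝ)-5)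
        + 125/6*((k:ℝ)-1)*((k:ℝ)-2)*((k:ℝ)-3) := by
      linear_combination q1 + q2 + q3
    have hmul : 35*((k:ℝ)-5)^3
        < (1 + ((k:ℝ)-1)*z + ((k:ℝ)-1)*(((k:ℝ)-1)-1)/2*z^2
            + ((k:ℝ)-1)*(((k:ℝ)-1)-1)*(((k:ℝ)-1)-2)/6*z^3)*((k:ℝ)-5)^3 := by
      rw [hexp]; exact hpoly
    exact lt_of_mul_lt_mul_right hmul (by positivity)
  have hcp : (0:ℝ) < (1-(5/(k:ℝ)))^(k-1) := pow_pos (by linarith) _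
  calc 35*(1-(5/(k:ℝ)))^(k-1) < (1+z)^(k-1)*(1-(5/(k:ℝ)))^(k-1) :=
        mul_lt_mul_of_pos_right key hcp
    _ = 1 := by rw [mul_comm]; exact e6

set_option maxHeartbeats 1000000 in
theorem p2star_exists_and_bounds (k : ℕ) (hk : 3 ≤ k) :
    ∃ p2 : ℝ,
      IsGreatest {x : ℝ | x ∈ Set.Icc (0:ℝ) 1 ∧
        (k:ℝ) * (2 * x * (1-x)^k + (k:ℝ) * x^2 * (1-x)^(k-1)) = 1} p2 ∧
      1 / (k:ℝ) < p2 ∧ p2 < min 1 (5 / (k:ℝ)) := by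
  have hk3 : (3:ℝ) ≤ (k:ℝ) := by exact_mod_cast hk
  have hk0 : (0:ℝ) < (k:ℝ) := by linarith
  have hkne : (k:ℝ) ≠ 0 := ne_of_gt hk0
  set f : ℝ → ℝ := fun x => (k:ℝ) * (2 * x * (1-x)^k + (k:ℝ) * x^2 * (1-x)^(k-1)) with hf
  have hfc : Continuous f := by fun_prop
  have hf1 : f 1 = 0 := by
    have h1 : k ≠ 0 := by omega
    have h2 : k - 1 ≠ 0 := by omega
    simp only [hf]
    rw [show (1:ℝ)-1 = 0 by ring, zero_pow h1, zero_pow h2]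
    ring
  have hpow : (1 - 1/(k:ℝ))^k = (1 - 1/(k:ℝ))^(k-1) * (1 - 1/(k:ℝ)) := by
    rw [← pow_succ]
    congr 1
    omega
  have hfa : 1 < f (1/(k:ℝ)) := by
    have heq : f (1/(k:ℝ)) = (1 - 1/(k:ℝ))^(k-1) * (2*(1 - 1/(k:ℝ)) + 1) := by
      simp only [hf]
      rw [hpow]
      field_simp
    rw [heq]
    exact aux_low k hk
  have h1k : 1/(k:ℝ) ≤ 1 := by rw [div_le_one hk0]; linarith
  have hIVT : (1:ℝ) ∈ Set.Ioo (f 1) (f (1/(k:ℝ))) := ⟨by rw [hf1]; norm_num, hfa⟩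
  obtain ⟨x₀, hx₀mem, hx₀eq⟩ := intermediate_value_Ioo' h1k hfc.continuousOn hIVT
  have hx₀pos : 0 < (1:ℝ)/(k:ℝ) := by positivity
  have hx₀S : x₀ ∈ {x : ℝ | x ∈ Set.Icc (0:ℝ) 1 ∧ f x = 1} :=
    ⟨⟨by linarith [hx₀mem.1], le_of_lt hx₀mem.2⟩, hx₀eq⟩
  have hSeq : {x : ℝ | x ∈ Set.Icc (0:ℝ) 1 ∧ f x = 1} = Set.Icc (0:ℝ) 1 ∩ f ⁻¹' {1} := by
    ext y
    simp only [Set.mem_setOf_eq, Set.mem_inter_iff, Set.mem_preimage, Set.mem_singleton_iff]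
  have hSc : IsCompact {x : ℝ | x ∈ Set.Icc (0:ℝ) 1 ∧ f x = 1} := by
    rw [hSeq]
    exact isCompact_Icc.inter_right (isClosed_singleton.preimage hfc)
  obtain ⟨p2, hmem, hub⟩ := hSc.exists_isGreatest ⟨x₀, hx₀S⟩
  refine ⟨p2, ⟨hmem, hub⟩, ?_, ?_⟩
  · exact lt_of_lt_of_le hx₀mem.1 (hub hx₀S)
  · have hp2le1 : p2 ≤ 1 := hmem.1.2
    have hp2f : f p2 = 1 := hmem.2
    have hp2lt1 : p2 < 1 := by
      rcases lt_or_eq_of_le hp2le1 with h | h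
      · exact h
      · exfalso; rw [h, hf1] at hp2f; norm_num at hp2f
    rcases le_or_gt k 5 with h5 | h5
    · have hk5 : (k:ℝ) ≤ 5 := by exact_mod_cast h5
      have h51 : (1:ℝ) ≤ 5/(k:ℝ) := by
        rw [le_div_iff₀ hk0]; linarith
      exact lt_min hp2lt1 (lt_of_lt_of_le hp2lt1 h51)
    · have hk6 : (6:ℝ) ≤ (k:ℝ) := by exact_mod_cast h5
      refine lt_min hp2lt1 ?_
      by_contra hcon
      push_neg at hcon
      have ha : (0:ℝ) < 5/(k:ℝ) := by positivity
      have ha1 : 5/(k:ℝ) < 1 := by rw [div_lt_one hk0]; linarith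
      have hak5 : (5/(k:ℝ)) * (k:ℝ) = 5 := by field_simp
      have hcast : ((k-1:ℕ):ℝ) = (k:ℝ) - 1 := by
        rw [Nat.cast_sub (by omega)]; norm_num
      have M1 : p2 * (1-p2)^k ≤ (5/(k:ℝ)) * (1-(5/(k:ℝ)))^k := by
        apply mono1 k ha hcon hp2le1
        linarith
      have M2 : p2^2 * (1-p2)^(k-1) ≤ (5/(k:ℝ))^2 * (1-(5/(k:ℝ)))^(k-1) := by
        apply mono2 (k-1) ha hcon hp2le1
        · rw [hcast]; nlinarith
        · rw [hcast]
          exact aux_cond2 k (by exact_mod_cast h5)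
      have e25 : (5/(k:ℝ))^2*(k:ℝ)^2 = 25 := by
        calc (5/(k:ℝ))^2*(k:ℝ)^2 = ((5/(k:ℝ))*(k:ℝ))^2 := by ring
          _ = 25 := by rw [hak5]; norm_num
      have hbound : f p2 ≤ 10*(1-(5/(k:ℝ)))^k + 25*(1-(5/(k:ℝ)))^(k-1) := by
        calc f p2 = 2*(k:ℝ)*(p2*(1-p2)^k) + (k:ℝ)^2*(p2^2*(1-p2)^(k-1)) := by
              simp only [hf]; ring
          _ ≤ 2*(k:ℝ)*((5/(k:ℝ))*(1-(5/(k:ℝ)))^k)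
              + (k:ℝ)^2*((5/(k:ℝ))^2*(1-(5/(k:ℝ)))^(k-1)) := by
              apply add_le_add
              · exact mul_le_mul_of_nonneg_left M1 (by linarith)
              · exact mul_le_mul_of_nonneg_left M2 (by positivity)
          _ = 10*(1-(5/(k:ℝ)))^k + 25*(1-(5/(k:ℝ)))^(k-1) := by
              linear_combination (2*(1-(5/(k:ℝ)))^k) * hak5 + ((1-(5/(k:ℝ)))^(k-1)) * e25
      have hmono : (1-(5/(k:ℝ)))^k ≤ (1-(5/(k:ℝ)))^(k-1) :=
        pow_le_pow_of_le_one (by linarith) (by linarith) (by omega)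
      have h35 := aux35 k (by exact_mod_cast h5)
      linarith
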